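/- Let D_F be the set of persistence diagrams all of whose off-diagonal points are finite. For any persistence diagram A, the infimum of D(C‖A) over C ∈ D_F is attained uniquely at the diagram B obtained from A by removing all points with an infinite coordinate, and D(B‖A) = (Σ_{a infinite in A} f(∞)^p)^{1/p}. -/

import Mathlib

open Multiset
open scoped ENNReal

attribute [local instance] Classical.propDecidable

noncomputable section

/-- A point of an (extended) persistence diagram: finite birth, possibly infinite death. -/
abbrev Pt : Type := ℝ × EReal

/-- A persistence diagram: a finite multiset of points strictly above the diagonal
(the diagonal itself, with infinite multiplicity, is treated implicitly). -/
def IsPD (A : Multiset Pt) : Prop := ∀ a ∈ A, (a.1 : EReal) < a.2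

/-- Sup-norm distance between two diagram points, with the convention that two
infinite death coordinates are at distance zero from each other. -/
def dInfty (a b : Pt) : ℝ≥0∞ :=
  max (ENNReal.ofReal |a.1 - b.1|)
    (if a.2 = ⊤ ∧ b.2 = ⊤ then 0 else (a.2 - b.2).abs)

/-- Sup-norm distance from a point to its diagonal projection
`λ(x,y) = ((x+y)/2,(x+y)/2)`; it is `∞` for points with infinite death. -/
def dDiag (a : Pt) : ℝ≥0∞ :=
  if a.2 = ⊤ then ⊤ else (a.2 - (a.1 : EReal)).abs / 2

/-- A point lying on the diagonal. -/
def isDiag (a : Pt) : Prop := a.2 = (a.1 : EReal)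

/-- `M` encodes an injection from the diagram `A` into the diagram `B` augmented with
all diagonal points: every point of `A` is matched (to an off-diagonal point of `B`,
with multiplicity, or to a diagonal point). -/
def IsInjMatching (A B : Multiset Pt) (M : Multiset (Pt × Pt)) : Prop :=
  M.map Prod.fst = A ∧ (M.map Prod.snd).filter (fun b => ¬ isDiag b) ≤ B

/-- The points of `B` not in the image of the injection encoded by `M`. -/
def unmatched (B : Multiset Pt) (M : Multiset (Pt × Pt)) : Multiset Pt :=
  B - (M.map Prod.snd).filter (fun b => ¬ isDiag b)

/-- The cost of an injection: matched pairs contribute `‖a-γ(a)‖_∞^p`, unmatched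
points of `B` contribute `f(‖b-λ(b)‖_∞)^p`. -/
def injCost (f : ℝ≥0∞ → ℝ≥0∞) (p : ℝ) (B : Multiset Pt) (M : Multiset (Pt × Pt)) : ℝ≥0∞ :=
  (M.map fun q => dInfty q.1 q.2 ^ p).sum +
    ((unmatched B M).map fun b => f (dDiag b) ^ p).sum

/-- The `(f,p)`-Wasserstein divergence `D_p^f(A‖B)`. -/
def WDiv (f : ℝ≥0∞ → ℝ≥0∞) (p : ℝ) (A B : Multiset Pt) : ℝ≥0∞ :=
  (⨅ (M : Multiset (Pt × Pt)) (_ : IsInjMatching A B M), injCost f p B M) ^ (1 / p)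

/-- The `(f,∞)`-bottleneck divergence `D_∞^f(A‖B)`. -/
def WDivInf (f : ℝ≥0∞ → ℝ≥0∞) (A B : Multiset Pt) : ℝ≥0∞ :=
  ⨅ (M : Multiset (Pt × Pt)) (_ : IsInjMatching A B M),
    max ((M.map fun q => dInfty q.1 q.2).sup)
      (((unmatched B M).map fun b => f (dDiag b)).sup)

/-- `M` encodes a bijection between `A` and `B`, both augmented with all diagonal
points: the off-diagonal sources are exactly `A` and the off-diagonal targets are
exactly `B`. -/
def IsBijMatching (A B : Multiset Pt) (M : Multiset (Pt × Pt)) : Prop :=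
  (M.map Prod.fst).filter (fun a => ¬ isDiag a) = A ∧
    (M.map Prod.snd).filter (fun b => ¬ isDiag b) = B

/-- The `p`-Wasserstein distance `d_p(A,B)`. -/
def Wass (p : ℝ) (A B : Multiset Pt) : ℝ≥0∞ :=
  (⨅ (M : Multiset (Pt × Pt)) (_ : IsBijMatching A B M),
    (M.map fun q => dInfty q.1 q.2 ^ p).sum) ^ (1 / p)

/-- The bottleneck distance `d_∞(A,B)`. -/
def WassInf (A B : Multiset Pt) : ℝ≥0∞ :=
  ⨅ (M : Multiset (Pt × Pt)) (_ : IsBijMatching A B M),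
    (M.map fun q => dInfty q.1 q.2).sup

/-- `f` is sub-diagonal: `f x ≤ x`. -/
def SubDiag (f : ℝ≥0∞ → ℝ≥0∞) : Prop := ∀ x, f x ≤ x

/-- `f` is sub-additive: `f (x+y) ≤ f x + f y`. -/
def SubAdd (f : ℝ≥0∞ → ℝ≥0∞) : Prop := ∀ x y, f (x + y) ≤ f x + f y

/-- The projection `π_F` deleting the points with infinite death coordinate. -/
def piF (A : Multiset Pt) : Multiset Pt := A.filter (fun a => a.2 ≠ ⊤)

end

section Helpers


private lemma msum_le {s t : Multiset ℝ≥0∞} (h : s ≤ t) : s.sum ≤ t.sum := by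
  obtain ⟨u, rfl⟩ := Multiset.le_iff_exists_add.mp h
  simp

private lemma pt_fin {a : Pt} (hpd : (a.1 : EReal) < a.2) (ht : a.2 ≠ ⊤) :
    ∃ r : ℝ, a.2 = (r : EReal) ∧ a.1 < r := by
  have hb : a.2 ≠ ⊥ := ((EReal.bot_lt_coe a.1).trans hpd).ne'
  obtain ⟨r, hr⟩ := EReal.canLift.prf a.2 ⟨ht, hb⟩
  exact ⟨r, hr.symm, by rw [← EReal.coe_lt_coe_iff]; rw [hr]; exact hpd⟩

private lemma dInfty_self {a : Pt} (hpd : (a.1 : EReal) < a.2) (ht : a.2 ≠ ⊤) :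
    dInfty a a = 0 := by
  obtain ⟨r, hr, _⟩ := pt_fin hpd ht
  simp [dInfty, hr, ← EReal.coe_sub, EReal.abs_def]

private lemma dInfty_top {a b : Pt} (ha : a.2 ≠ ⊤) (hb : b.2 = ⊤) : dInfty a b = ⊤ := by
  simp [dInfty, ha, hb, EReal.sub_top]

private lemma dDiag_pos {a : Pt} (hpd : (a.1 : EReal) < a.2) : 0 < dDiag a := by
  by_cases ht : a.2 = ⊤
  · simp [dDiag, ht]
  obtain ⟨r, hr, hlt⟩ := pt_fin hpd ht
  simp only [dDiag, hr, EReal.coe_ne_top, if_false, ← EReal.coe_sub, EReal.abs_def]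
  exact ENNReal.div_pos (ne_of_gt (ENNReal.ofReal_pos.mpr (abs_pos.mpr (sub_ne_zero.mpr hlt.ne'))))
    ENNReal.ofNat_ne_top

private lemma dDiag_le_dInfty {a d : Pt} (hpd : (a.1 : EReal) < a.2) (ht : a.2 ≠ ⊤)
    (hd : isDiag d) : dDiag a ≤ dInfty a d := by
  obtain ⟨r, hr, _⟩ := pt_fin hpd ht
  have hd2 : d.2 = (d.1 : EReal) := hd
  simp only [dDiag, dInfty, hr, EReal.coe_ne_top, if_false, hd2, ← EReal.coe_sub, EReal.abs_def,
    EReal.coe_ne_top, and_false, if_false]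
  have h2 : ENNReal.ofReal |r - a.1| / 2 = ENNReal.ofReal (|r - a.1| / 2) := by
    rw [ENNReal.ofReal_div_of_pos (by norm_num), ENNReal.ofReal_ofNat]
  rw [h2]
  have htri : |r - a.1| ≤ |r - d.1| + |a.1 - d.1| := by
    calc |r - a.1| ≤ |r - d.1| + |d.1 - a.1| := abs_sub_le r d.1 a.1
      _ = |r - d.1| + |a.1 - d.1| := by rw [abs_sub_comm d.1 a.1]
  rcases le_total |a.1 - d.1| |r - d.1| with h | h
  · exact le_trans (ENNReal.ofReal_le_ofReal (by linarith)) (le_max_right _ _)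
  · exact le_trans (ENNReal.ofReal_le_ofReal (by linarith)) (le_max_left _ _)

private lemma dInfty_pos {a b : Pt} (hapd : (a.1 : EReal) < a.2) (hat : a.2 ≠ ⊤)
    (hbpd : (b.1 : EReal) < b.2) (hbt : b.2 ≠ ⊤) (hne : a ≠ b) : 0 < dInfty a b := by
  obtain ⟨r, hr, _⟩ := pt_fin hapd hat
  obtain ⟨s, hs, _⟩ := pt_fin hbpd hbt
  rw [pos_iff_ne_zero]
  intro h0
  have hif : ¬ (a.2 = ⊤ ∧ b.2 = ⊤) := by simp [hat]
  rw [dInfty, if_neg hif, hr, hs, ← EReal.coe_sub, EReal.abs_def] at h0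
  have h1 : ENNReal.ofReal |a.1 - b.1| = 0 := le_zero_iff.mp (le_trans (le_max_left _ _) h0.le)
  have h2 : ENNReal.ofReal |r - s| = 0 := le_zero_iff.mp (le_trans (le_max_right _ _) h0.le)
  rw [ENNReal.ofReal_eq_zero, abs_nonpos_iff, sub_eq_zero] at h1 h2
  exact hne (Prod.ext h1 (by rw [hr, hs, h2]))

end Helpers

/-- Among diagrams with only finite points, `D(-‖A)` is uniquely minimized by
the diagram obtained from `A` by deleting its infinite points, and the minimal
value is `(Σ_{a infinite in A} f(∞)^p)^{1/p}`. -/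
theorem projection_minimizes_wdiv (F : ℝ≥0∞ → ℝ≥0∞) (hc : Continuous F)
    (hd : SubDiag F) (ha : SubAdd F)
    (hpos : ∀ x : ℝ≥0∞, 0 < x → 0 < F x) (htop : F ⊤ ≠ ⊤)
    (p : ℝ) (hp : 1 ≤ p) (A : Multiset Pt) (hA : IsPD A) :
    (∀ C : Multiset Pt, IsPD C → (∀ c ∈ C, c.2 ≠ ⊤) →
        WDiv F p (piF A) A ≤ WDiv F p C A) ∧
    (∀ C : Multiset Pt, IsPD C → (∀ c ∈ C, c.2 ≠ ⊤) →
        WDiv F p C A = WDiv F p (piF A) A → C = piF A) ∧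
    WDiv F p (piF A) A =
      ((A.filter (fun a => a.2 = ⊤)).card • (F ⊤ ^ p)) ^ (1 / p) := by
  have hp0 : (0:ℝ) < p := lt_of_lt_of_le one_pos hp
  have hp0' : p ≠ 0 := ne_of_gt hp0
  set I : Multiset Pt := A.filter (fun a => a.2 = ⊤) with hIdef
  set n : ℕ := I.card with hndef
  set c0 : ℝ≥0∞ := F ⊤ ^ p with hc0def
  have hsplit : I + piF A = A := by
    rw [hIdef, piF]
    refine Multiset.ext.mpr fun a => ?_
    rw [Multiset.count_add, Multiset.count_filter, Multiset.count_filter]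
    by_cases h : a.2 = ⊤ <;> simp [h]
  have hPpd : ∀ b ∈ piF A, (b.1 : EReal) < b.2 :=
    fun b hb => hA b (Multiset.mem_of_le (Multiset.filter_le _ _) hb)
  have hPfin : ∀ b ∈ piF A, b.2 ≠ ⊤ := fun b hb => (Multiset.mem_filter.mp hb).2
  have hPnd : ∀ b ∈ piF A, ¬ isDiag b := fun b hb h => (hPpd b hb).ne' h
  have hIg : (I.map (fun b => F (dDiag b) ^ p)).sum = n • c0 := by
    have h1 : I.map (fun b => F (dDiag b) ^ p) = Multiset.replicate I.card c0 := by
      rw [← Multiset.map_const']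
      refine Multiset.map_congr rfl (fun a haI => ?_)
      have h2 : a.2 = ⊤ := (Multiset.mem_filter.mp haI).2
      simp [dDiag, h2, hc0def]
    rw [h1, Multiset.sum_replicate]
  -- the submultiset of matched targets lands in `piF A` when all targets are finite
  have hSub : ∀ M : Multiset (Pt × Pt),
      (M.map Prod.snd).filter (fun b => ¬ isDiag b) ≤ A → (∀ q ∈ M, q.2.2 ≠ ⊤) →
      (M.map Prod.snd).filter (fun b => ¬ isDiag b) ≤ piF A := by
    intro M h1 hfin
    have h2 : ∀ s ∈ (M.map Prod.snd).filter (fun b => ¬ isDiag b), s.2 ≠ ⊤ := by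
      intro s hs
      have hs' : s ∈ M.map Prod.snd := Multiset.mem_of_le (Multiset.filter_le _ _) hs
      obtain ⟨q, hq, rfl⟩ := Multiset.mem_map.mp hs'
      exact hfin q hq
    rw [piF, Multiset.le_filter]
    exact ⟨h1, h2⟩
  -- lower bound for the cost of any matching
  have lower : ∀ C : Multiset Pt, (∀ c ∈ C, c.2 ≠ ⊤) →
      ∀ M, IsInjMatching C A M → n • c0 ≤ injCost F p A M := by
    intro C hCfin M hM
    by_cases hfin : ∀ q ∈ M, q.2.2 ≠ ⊤
    · have hSP := hSub M hM.2 hfin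
      have hle : I ≤ unmatched A M := by
        have h4 := add_tsub_assoc_of_le hSP (a := I)
        rw [hsplit] at h4
        rw [unmatched, h4]
        exact le_self_add
      calc n • c0 = (I.map (fun b => F (dDiag b) ^ p)).sum := hIg.symm
        _ ≤ ((unmatched A M).map (fun b => F (dDiag b) ^ p)).sum :=
            msum_le (Multiset.map_le_map hle)
        _ ≤ injCost F p A M := le_add_self
    · push_neg at hfin
      obtain ⟨q, hq, hq2⟩ := hfin
      have hq1 : q.1.2 ≠ ⊤ := hCfin q.1 (hM.1 ▸ Multiset.mem_map_of_mem Prod.fst hq)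
      have htopc : (⊤:ℝ≥0∞) ≤ injCost F p A M := by
        calc (⊤:ℝ≥0∞) = dInfty q.1 q.2 ^ p := by
              rw [dInfty_top hq1 hq2, ENNReal.top_rpow_of_pos hp0]
          _ ≤ (M.map fun q => dInfty q.1 q.2 ^ p).sum :=
              Multiset.le_sum_of_mem (Multiset.mem_map_of_mem (fun q : Pt × Pt => dInfty q.1 q.2 ^ p) hq)
          _ ≤ injCost F p A M := le_self_add
      exact le_top.trans htopc
  -- the identity matching on `piF A`
  set M₀ : Multiset (Pt × Pt) := (piF A).map (fun b => (b, b)) with hM₀def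
  have hfst : M₀.map Prod.fst = piF A := by
    rw [hM₀def, Multiset.map_map]; simp
  have hsnd : M₀.map Prod.snd = piF A := by
    rw [hM₀def, Multiset.map_map]; simp
  have hM₀ : IsInjMatching (piF A) A M₀ := by
    constructor
    · exact hfst
    · refine le_trans (Multiset.filter_le _ _) ?_
      rw [hsnd, piF]
      exact Multiset.filter_le _ A
  have hcost₀ : injCost F p A M₀ = n • c0 := by
    rw [injCost]
    have h1 : (M₀.map fun q => dInfty q.1 q.2 ^ p).sum = 0 := by
      refine Multiset.sum_eq_zero ?_
      intro x hx
      obtain ⟨q, hqM, rfl⟩ := Multiset.mem_map.mp hx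
      rw [hM₀def] at hqM
      obtain ⟨b, hbP, rfl⟩ := Multiset.mem_map.mp hqM
      show dInfty b b ^ p = 0
      rw [dInfty_self (hPpd b hbP) (hPfin b hbP), ENNReal.zero_rpow_of_pos hp0]
    have h2 : unmatched A M₀ = I := by
      rw [unmatched, hsnd, hIdef]
      refine Multiset.ext.mpr fun a => ?_
      rw [Multiset.count_sub, Multiset.count_filter, piF, Multiset.count_filter,
        Multiset.count_filter]
      by_cases h1 : a.2 = ⊤ <;> by_cases h2 : isDiag a
      · have hAc : Multiset.count a A = 0 :=
          Multiset.count_eq_zero.mpr (fun hmem => (hA a hmem).ne' h2)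
        simp [h1, h2, hAc]
      · simp [h1, h2]
      · have hAc : Multiset.count a A = 0 :=
          Multiset.count_eq_zero.mpr (fun hmem => (hA a hmem).ne' h2)
        simp [h1, h2, hAc]
      · simp [h1, h2]
    rw [h1, h2, hIg, zero_add]
  have hJP : (⨅ M, ⨅ (_ : IsInjMatching (piF A) A M), injCost F p A M) = n • c0 := by
    refine le_antisymm (le_trans (iInf₂_le M₀ hM₀) (le_of_eq hcost₀)) ?_
    exact le_iInf₂ fun M hM => lower (piF A) hPfin M hM
  have hval : WDiv F p (piF A) A = (n • c0) ^ (1/p) := by rw [WDiv, hJP]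
  have hc0ntop : c0 ≠ ⊤ := ENNReal.rpow_ne_top_of_nonneg (le_of_lt hp0) htop
  have hnc0top : n • c0 ≠ ⊤ := by
    rw [nsmul_eq_mul]
    exact ENNReal.mul_ne_top (ENNReal.natCast_ne_top n) hc0ntop
  refine ⟨?_, ?_, ?_⟩
  · -- minimality
    intro C _hC hCfin
    rw [hval, WDiv]
    refine ENNReal.rpow_le_rpow ?_ (by positivity)
    exact le_iInf₂ fun M hM => lower C hCfin M hM
  · -- uniqueness
    intro C hC hCfin heq
    have hJC : (⨅ M, ⨅ (_ : IsInjMatching C A M), injCost F p A M) = n • c0 := by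
      have h := heq.trans hval
      rw [WDiv] at h
      exact ENNReal.rpow_left_injective (one_div_ne_zero hp0') h
    -- a positive threshold below all the relevant positive quantities
    set T : Multiset ℝ≥0∞ := (piF A).map (fun b => F (dDiag b) ^ p)
        + C.map (fun c => dDiag c ^ p)
        + C.bind (fun c => (piF A).map (fun b => if c = b then 1 else dInfty c b ^ p)) with hT
    set ε : ℝ≥0∞ := min 1 (T.toFinset.inf id) with hεdef
    have hεle : ∀ x ∈ T, ε ≤ x := fun x hx =>
      le_trans (min_le_right _ _) (Finset.inf_le (Multiset.mem_toFinset.mpr hx))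
    have hεpos : 0 < ε := by
      refine lt_min one_pos ?_
      rw [Finset.lt_inf_iff (lt_top_iff_ne_top.mpr ENNReal.zero_ne_top)]
      intro b hb
      rw [Multiset.mem_toFinset, hT, Multiset.mem_add, Multiset.mem_add] at hb
      rcases hb with (hb | hb) | hb
      · obtain ⟨b', hb', rfl⟩ := Multiset.mem_map.mp hb
        exact ENNReal.rpow_pos_of_nonneg (hpos _ (dDiag_pos (hPpd b' hb'))) (le_of_lt hp0)
      · obtain ⟨c, hcC, rfl⟩ := Multiset.mem_map.mp hb
        exact ENNReal.rpow_pos_of_nonneg (dDiag_pos (hC c hcC)) (le_of_lt hp0)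
      · obtain ⟨c, hcC, hb2⟩ := Multiset.mem_bind.mp hb
        obtain ⟨b', hb', rfl⟩ := Multiset.mem_map.mp hb2
        by_cases hcb : c = b'
        · simp [hcb]
        · rw [if_neg hcb]
          exact ENNReal.rpow_pos_of_nonneg
            (dInfty_pos (hC c hcC) (hCfin c hcC) (hPpd b' hb') (hPfin b' hb') hcb)
            (le_of_lt hp0)
    have hbound : (⨅ M, ⨅ (_ : IsInjMatching C A M), injCost F p A M) < n • c0 + ε := by
      rw [hJC]
      exact ENNReal.lt_add_right hnc0top (ne_of_gt hεpos)
    obtain ⟨M, hMlt⟩ := iInf_lt_iff.mp hbound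
    by_cases hM : IsInjMatching C A M
    case neg => rw [iInf_neg hM] at hMlt; exact absurd hMlt not_top_lt
    rw [iInf_pos hM] at hMlt
    -- all targets are finite
    have hfinM : ∀ q ∈ M, q.2.2 ≠ ⊤ := by
      intro q hq hq2
      have hq1 : q.1.2 ≠ ⊤ := hCfin q.1 (hM.1 ▸ Multiset.mem_map_of_mem Prod.fst hq)
      have htopc : (⊤:ℝ≥0∞) ≤ injCost F p A M := by
        calc (⊤:ℝ≥0∞) = dInfty q.1 q.2 ^ p := by
              rw [dInfty_top hq1 hq2, ENNReal.top_rpow_of_pos hp0]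
          _ ≤ (M.map fun q => dInfty q.1 q.2 ^ p).sum :=
              Multiset.le_sum_of_mem (Multiset.mem_map_of_mem (fun q : Pt × Pt => dInfty q.1 q.2 ^ p) hq)
          _ ≤ injCost F p A M := le_self_add
      exact not_top_lt (lt_of_le_of_lt htopc hMlt)
    set S : Multiset Pt := (M.map Prod.snd).filter (fun b => ¬ isDiag b) with hSdef
    have hSP : S ≤ piF A := hSub M hM.2 hfinM
    -- cost decomposition
    have hdec : injCost F p A M = injCost F p (piF A) M + n • c0 := by
      have h3 : A - S = I + (piF A - S) := by
        have h4 := add_tsub_assoc_of_le hSP (a := I)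
        rw [hsplit] at h4
        exact h4
      simp only [injCost, unmatched, ← hSdef]
      rw [h3, Multiset.map_add, Multiset.sum_add, hIg]
      ring
    have hcostP : injCost F p (piF A) M < ε := by
      have h := hMlt
      rw [hdec, add_comm (n • c0) ε] at h
      exact (ENNReal.add_lt_add_iff_right hnc0top).mp h
    -- every point of `piF A` is matched
    have hPS : piF A - S = 0 := by
      by_contra h
      obtain ⟨b, hb⟩ := Multiset.exists_mem_of_ne_zero h
      have hbP : b ∈ piF A := Multiset.mem_of_le tsub_le_self hb
      have h1 : F (dDiag b) ^ p ≤ injCost F p (piF A) M := by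
        calc F (dDiag b) ^ p
            ≤ ((piF A - S).map (fun b => F (dDiag b) ^ p)).sum :=
              Multiset.le_sum_of_mem (Multiset.mem_map_of_mem (fun b : Pt => F (dDiag b) ^ p) hb)
          _ ≤ injCost F p (piF A) M := by
              simp only [injCost, unmatched, ← hSdef]
              exact le_add_self
      have h2 : ε ≤ F (dDiag b) ^ p := by
        refine hεle _ ?_
        rw [hT, Multiset.mem_add, Multiset.mem_add]
        exact Or.inl (Or.inl (Multiset.mem_map_of_mem _ hbP))
      exact absurd (lt_of_le_of_lt (h2.trans h1) hcostP) (lt_irrefl ε)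
    have hSeqP : S = piF A := le_antisymm hSP (tsub_eq_zero_iff_le.mp hPS)
    -- no point is matched to the diagonal
    have hnd : ∀ q ∈ M, ¬ isDiag q.2 := by
      intro q hq hdq
      have hq1C : q.1 ∈ C := hM.1 ▸ Multiset.mem_map_of_mem Prod.fst hq
      have h1 : dDiag q.1 ^ p ≤ dInfty q.1 q.2 ^ p :=
        ENNReal.rpow_le_rpow (dDiag_le_dInfty (hC _ hq1C) (hCfin _ hq1C) hdq) (le_of_lt hp0)
      have h2 : dInfty q.1 q.2 ^ p ≤ injCost F p (piF A) M := by
        rw [injCost]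
        exact le_trans
          (Multiset.le_sum_of_mem
            (Multiset.mem_map_of_mem (fun q : Pt × Pt => dInfty q.1 q.2 ^ p) hq))
          le_self_add
      have h3 : ε ≤ dDiag q.1 ^ p := by
        refine hεle _ ?_
        rw [hT, Multiset.mem_add, Multiset.mem_add]
        exact Or.inl (Or.inr (Multiset.mem_map_of_mem _ hq1C))
      exact absurd (lt_of_le_of_lt (h3.trans (h1.trans h2)) hcostP) (lt_irrefl _)
    have hfe : (M.map Prod.snd).filter (fun b => ¬ isDiag b) = M.map Prod.snd :=
      Multiset.filter_eq_self.mpr (fun b hb => by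
        obtain ⟨q, hq, rfl⟩ := Multiset.mem_map.mp hb
        exact hnd q hq)
    have hsndM : M.map Prod.snd = piF A := by rw [← hSeqP, hSdef, hfe]
    -- every point is matched to itself
    have hqq : ∀ q ∈ M, Prod.fst q = Prod.snd q := by
      intro q hq
      by_contra hne
      have hq1C : q.1 ∈ C := hM.1 ▸ Multiset.mem_map_of_mem Prod.fst hq
      have hq2P : q.2 ∈ piF A := hsndM ▸ Multiset.mem_map_of_mem Prod.snd hq
      have h3 : ε ≤ dInfty q.1 q.2 ^ p := by
        have hmem : (if q.1 = q.2 then (1:ℝ≥0∞) else dInfty q.1 q.2 ^ p) ∈ T := by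
          rw [hT, Multiset.mem_add]
          exact Or.inr (Multiset.mem_bind.mpr ⟨q.1, hq1C, Multiset.mem_map_of_mem _ hq2P⟩)
        have h4 := hεle _ hmem
        rwa [if_neg hne] at h4
      have h2 : dInfty q.1 q.2 ^ p ≤ injCost F p (piF A) M := by
        rw [injCost]
        exact le_trans
          (Multiset.le_sum_of_mem
            (Multiset.mem_map_of_mem (fun q : Pt × Pt => dInfty q.1 q.2 ^ p) hq))
          le_self_add
      exact absurd (lt_of_le_of_lt (h3.trans h2) hcostP) (lt_irrefl _)
    calc C = M.map Prod.fst := hM.1.symm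
      _ = M.map Prod.snd := Multiset.map_congr rfl hqq
      _ = piF A := hsndM
  · -- value
    rw [hval, hndef, hIdef, hc0def]
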